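/- For every γ > 0 there exists B₀ such that the following holds for every even integer B ≥ B₀. Let σ be a probability mass function on Fin B, let S* = { x ∈ Fin B : σ(x) ≤ B^{7γ−1} }, and assume σ(S*) ≥ 1/5. Let τ be a probability mass function on pair-selections, and let (s,t) be drawn from the product distribution σ × τ. Assume (i) Pr[s ∈ T(t)] ≤ 1/42, and (iii) the conditional entropy H(t | s), computed under σ × τ conditioned on the event s ∉ T(t), is at least B/2 − (1/840)·B^{1−7γ}. Define f*(t) = Σ_{x ∈ T(t) ∩ S*} σ(x). Then Pr_{t ∼ τ}[ f*(t) < 1/20 ] ≤ 1/2. -/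

import Mathlib

open Finset

/-- `memT t x` : the element `x ∈ Fin B` belongs to the set `T(t)` determined by the
pair-selection `t : Fin (B/2) → Bool`, namely `T(t) = { 2k + (if t k then 1 else 0) }`. -/
def memT {B : ℕ} (t : Fin (B / 2) → Bool) (x : Fin B) : Prop :=
  ∃ k : Fin (B / 2), (x : ℕ) = 2 * (k : ℕ) + (if t k then 1 else 0)

instance {B : ℕ} (t : Fin (B / 2) → Bool) (x : Fin B) : Decidable (memT t x) := by
  unfold memT; infer_instance

/-- The probability that `s ∈ T(t)` when `(s,t)` is drawn from the product `σ × τ`. -/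
noncomputable def prHit {B : ℕ} (σ : Fin B → ℝ) (τ : (Fin (B / 2) → Bool) → ℝ) : ℝ :=
  ∑ x : Fin B, ∑ t : Fin (B / 2) → Bool, if memT t x then σ x * τ t else 0

/-- The joint distribution `σ × τ` conditioned on the event `s ∉ T(t)`. -/
noncomputable def condJoint {B : ℕ} (σ : Fin B → ℝ) (τ : (Fin (B / 2) → Bool) → ℝ)
    (x : Fin B) (t : Fin (B / 2) → Bool) : ℝ :=
  (if memT t x then 0 else σ x * τ t) /
    ∑ x' : Fin B, ∑ t' : Fin (B / 2) → Bool, if memT t' x' then 0 else σ x' * τ t'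

/-- `H(s | t)`, in bits, under `σ × τ` conditioned on `s ∉ T(t)`:
`H(s | t) = ∑_t Pr[t] · H(s | t = t) = ∑_t ∑_x −p(x,t) · log₂ (p(x,t)/p(t))`. -/
noncomputable def condEntS {B : ℕ} (σ : Fin B → ℝ) (τ : (Fin (B / 2) → Bool) → ℝ) : ℝ :=
  ∑ t : Fin (B / 2) → Bool, ∑ x : Fin B,
    -(condJoint σ τ x t) *
      Real.logb 2 (condJoint σ τ x t / ∑ x' : Fin B, condJoint σ τ x' t)

/-- `H(t | s)`, in bits, under `σ × τ` conditioned on `s ∉ T(t)`. -/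
noncomputable def condEntT {B : ℕ} (σ : Fin B → ℝ) (τ : (Fin (B / 2) → Bool) → ℝ) : ℝ :=
  ∑ x : Fin B, ∑ t : Fin (B / 2) → Bool,
    -(condJoint σ τ x t) *
      Real.logb 2 (condJoint σ τ x t / ∑ t' : Fin (B / 2) → Bool, condJoint σ τ x t')

/-- `f*(t) = ∑_{x ∈ T(t) ∩ S*} σ(x)`, where `S* = { x : σ x ≤ c }`. -/
noncomputable def fstar {B : ℕ} (σ : Fin B → ℝ) (c : ℝ) (t : Fin (B / 2) → Bool) : ℝ :=
  ∑ x : Fin B, if memT t x ∧ σ x ≤ c then σ x else 0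

/-- core Jensen-type bound with natural log -/
lemma aux_core {ι : Type*} (s : Finset ι) (w : ι → ℝ) (hw : ∀ i ∈ s, 0 ≤ w i)
    (P : ℝ) (hP : 0 < P) (hW : 0 < ∑ i ∈ s, w i) :
    ∑ i ∈ s, -(w i * Real.log (w i / P)) ≤
      (∑ i ∈ s, w i) * Real.log (s.card) + (∑ i ∈ s, w i) * Real.log (P / ∑ i ∈ s, w i) := by
  classical
  set W := ∑ i ∈ s, w i with hWdef
  set s' := s.filter (fun i => 0 < w i) with hs'
  have hsub : s' ⊆ s := Finset.filter_subset _ _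
  have hW' : ∑ i ∈ s', w i = W := by
    rw [hWdef, Finset.sum_filter_of_ne]
    intro x hx h
    exact lt_of_le_of_ne (hw x hx) (Ne.symm h)
  have hs'ne : s'.Nonempty := by
    by_contra h
    rw [Finset.not_nonempty_iff_eq_empty] at h
    rw [← hW', h, Finset.sum_empty] at hW
    exact lt_irrefl 0 hW
  have hcard : (0:ℝ) < s.card := by
    have := Finset.card_le_card hsub
    have := Finset.card_pos.2 (hs'ne.mono hsub)
    exact_mod_cast this
  have hLHS : ∑ i ∈ s, -(w i * Real.log (w i / P)) = ∑ i ∈ s', -(w i * Real.log (w i / P)) := by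
    rw [hs', Finset.sum_filter_of_ne]
    intro x hx h
    by_contra hpos
    push_neg at hpos
    have : w x = 0 := le_antisymm hpos (hw x hx)
    simp [this] at h
  rw [hLHS]
  have key : ∀ i ∈ s', -(w i * Real.log (w i / P)) =
      w i * Real.log (s.card) + w i * Real.log (P / W) + w i * Real.log (W / (s.card * w i)) := by
    intro i hi
    have hwi : 0 < w i := (Finset.mem_filter.1 hi).2
    rw [Real.log_div hwi.ne' hP.ne', Real.log_div hP.ne' hW.ne',
        Real.log_div hW.ne' (by positivity), Real.log_mul hcard.ne' hwi.ne']
    ring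
  rw [Finset.sum_congr rfl key, Finset.sum_add_distrib, Finset.sum_add_distrib,
    ← Finset.sum_mul, ← Finset.sum_mul, hW']
  have htail : ∑ i ∈ s', w i * Real.log (W / (s.card * w i)) ≤ 0 := by
    have h1 : ∀ i ∈ s', w i * Real.log (W / (s.card * w i)) ≤ W / s.card - w i := by
      intro i hi
      have hwi : 0 < w i := (Finset.mem_filter.1 hi).2
      have hpos : 0 < W / (s.card * w i) := by positivity
      have := Real.log_le_sub_one_of_pos hpos
      calc w i * Real.log (W / (s.card * w i)) ≤ w i * (W / (s.card * w i) - 1) :=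
            mul_le_mul_of_nonneg_left this hwi.le
        _ = W / s.card - w i := by field_simp
    calc ∑ i ∈ s', w i * Real.log (W / (s.card * w i)) ≤ ∑ i ∈ s', (W / s.card - w i) :=
          Finset.sum_le_sum h1
      _ = s'.card * (W / s.card) - W := by rw [Finset.sum_sub_distrib, Finset.sum_const,
          nsmul_eq_mul, hW']
      _ ≤ s.card * (W / s.card) - W := by
          have : (s'.card : ℝ) ≤ s.card := by exact_mod_cast Finset.card_le_card hsub
          have hWc : 0 ≤ W / s.card := by positivity
          nlinarith
      _ = 0 := by field_simp; ring
  linarith [htail]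

/-- Jensen bound, logb form, with card bound `C` and degenerate cases handled. -/
lemma aux_jensen {ι : Type*} (s : Finset ι) (w : ι → ℝ) (hw : ∀ i ∈ s, 0 ≤ w i)
    (P : ℝ) (hP : 0 < P) (C : ℝ) (hC : Real.logb 2 (s.card) ≤ C) :
    ∑ i ∈ s, -(w i) * Real.logb 2 (w i / P) ≤
      (∑ i ∈ s, w i) * C + (∑ i ∈ s, w i) * Real.logb 2 (P / ∑ i ∈ s, w i) := by
  have hWnn : 0 ≤ ∑ i ∈ s, w i := Finset.sum_nonneg hw
  rcases eq_or_lt_of_le hWnn with hW0 | hW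
  · have hz : ∀ i ∈ s, w i = 0 := (Finset.sum_eq_zero_iff_of_nonneg hw).1 hW0.symm
    have hL : ∑ i ∈ s, -(w i) * Real.logb 2 (w i / P) = 0 :=
      Finset.sum_eq_zero fun i hi => by rw [hz i hi]; ring
    rw [hL, ← hW0]
    simp
  · have hlog2 : (0:ℝ) < Real.log 2 := Real.log_pos one_lt_two
    have hcore := aux_core s w hw P hP hW
    have hcard : Real.log (s.card) ≤ C * Real.log 2 := by
      have : Real.logb 2 (s.card) * Real.log 2 = Real.log (s.card) := by
        rw [Real.logb]; field_simp
      nlinarith [hC]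
    have h1 : ∑ i ∈ s, -(w i) * Real.logb 2 (w i / P) =
        (∑ i ∈ s, -(w i * Real.log (w i / P))) / Real.log 2 := by
      rw [Finset.sum_div]
      refine Finset.sum_congr rfl fun i hi => ?_
      rw [Real.logb]; ring
    rw [h1, Real.logb, div_le_iff₀ hlog2]
    calc (∑ i ∈ s, -(w i * Real.log (w i / P)))
        ≤ (∑ i ∈ s, w i) * Real.log (s.card) + (∑ i ∈ s, w i) * Real.log (P / ∑ i ∈ s, w i) :=
          hcore
      _ ≤ (∑ i ∈ s, w i) * (C * Real.log 2) + (∑ i ∈ s, w i) * Real.log (P / ∑ i ∈ s, w i) := by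
          nlinarith [mul_le_mul_of_nonneg_left hcard hWnn]
      _ = ((∑ i ∈ s, w i) * C + (∑ i ∈ s, w i) * (Real.log (P / ∑ i ∈ s, w i) / Real.log 2)) *
            Real.log 2 := by field_simp
  
/-- binary entropy ≤ 1 -/
lemma aux_binary (u v : ℝ) (hu : 0 ≤ u) (hv : 0 ≤ v) :
    u * Real.logb 2 ((u + v) / u) + v * Real.logb 2 ((u + v) / v) ≤ u + v := by
  have hlog2 : (0:ℝ) < Real.log 2 := Real.log_pos one_lt_two
  rcases eq_or_lt_of_le hu with hu0 | hu
  · rcases eq_or_lt_of_le hv with hv0 | hv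
    · simp [← hu0, ← hv0]
    · rw [← hu0]; simp [div_self hv.ne']; positivity
  · rcases eq_or_lt_of_le hv with hv0 | hv
    · rw [← hv0]; simp [div_self hu.ne']; positivity
    · have h1 : Real.log ((u + v) / u) ≤ (u + v) / (2 * u) - 1 + Real.log 2 := by
        have hpos : (0:ℝ) < (u + v) / (2 * u) := by positivity
        have := Real.log_le_sub_one_of_pos hpos
        have heq : Real.log ((u + v) / u) = Real.log ((u + v) / (2 * u)) + Real.log 2 := by
          rw [← Real.log_mul hpos.ne' (by norm_num)]
          congr 1
          field_simp
        linarith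
      have h2 : Real.log ((u + v) / v) ≤ (u + v) / (2 * v) - 1 + Real.log 2 := by
        have hpos : (0:ℝ) < (u + v) / (2 * v) := by positivity
        have := Real.log_le_sub_one_of_pos hpos
        have heq : Real.log ((u + v) / v) = Real.log ((u + v) / (2 * v)) + Real.log 2 := by
          rw [← Real.log_mul hpos.ne' (by norm_num)]
          congr 1
          field_simp
        linarith
      have key : u * Real.log ((u+v)/u) + v * Real.log ((u+v)/v) ≤ (u + v) * Real.log 2 := by
        have e1 : u * ((u + v) / (2 * u) - 1 + Real.log 2) +
            v * ((u + v) / (2 * v) - 1 + Real.log 2) = (u + v) * Real.log 2 := by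
          field_simp
          ring
        nlinarith [mul_le_mul_of_nonneg_left h1 hu.le, mul_le_mul_of_nonneg_left h2 hv.le]
      have hrw : u * (Real.log ((u+v)/u) / Real.log 2) + v * (Real.log ((u+v)/v) / Real.log 2)
          = (u * Real.log ((u+v)/u) + v * Real.log ((u+v)/v)) / Real.log 2 := by ring
      rw [Real.logb, Real.logb, hrw, div_le_iff₀ hlog2]
      exact key


/-- chord bound -/
lemma aux_chord (c a b : ℝ) (hc : 0 < c) (ha : 0 ≤ a) (hac : a ≤ c) (hb : 0 ≤ b) (hbc : b ≤ c) :
    Real.exp (-(a / c)) + Real.exp (-(b / c)) ≤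
      2 * Real.exp (-((a + b) / (2 * c)) * (1 - Real.exp (-1))) := by
  have step1 : ∀ x : ℝ, 0 ≤ x → x ≤ c → Real.exp (-(x / c)) ≤ 1 - (x / c) * (1 - Real.exp (-1)) := by
    intro x hx hxc
    have hθ : 0 ≤ x / c := by positivity
    have hθ1 : 0 ≤ 1 - x / c := by
      have : x / c ≤ 1 := (div_le_one hc).2 hxc
      linarith
    have := convexOn_exp.2 (Set.mem_univ (-1:ℝ)) (Set.mem_univ (0:ℝ)) hθ hθ1 (by ring)
    simp only [smul_eq_mul, mul_neg, mul_one, mul_zero, add_zero, Real.exp_zero] at this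
    calc Real.exp (-(x / c)) = Real.exp (x / c * -1 + (1 - x / c) * 0) := by ring_nf
      _ ≤ x / c * Real.exp (-1) + (1 - x / c) * 1 := by simpa using this
      _ = 1 - (x / c) * (1 - Real.exp (-1)) := by ring
  have h1 := step1 a ha hac
  have h2 := step1 b hb hbc
  have hy : 2 - ((a + b) / c) * (1 - Real.exp (-1)) ≤
      2 * Real.exp (-((a + b) / (2 * c)) * (1 - Real.exp (-1))) := by
    have := Real.add_one_le_exp (-((a + b) / (2 * c)) * (1 - Real.exp (-1)))
    have heq : ((a + b) / c) * (1 - Real.exp (-1)) = 2 * (((a + b) / (2 * c)) * (1 - Real.exp (-1))) := by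
      field_simp
    nlinarith
  have hsplit : a / c * (1 - Real.exp (-1)) + b / c * (1 - Real.exp (-1)) =
      (a + b) / c * (1 - Real.exp (-1)) := by field_simp
  linarith

/-- product-sum factorization over boolean tuples -/
lemma aux_factor {α : Type*} [CommSemiring α] (m : ℕ) (g : Fin m → Bool → α) :
    ∑ t : Fin m → Bool, ∏ k, g k (t k) = ∏ k, (g k false + g k true) := by
  rw [← Fintype.prod_sum (fun (k : Fin m) (b : Bool) => g k b)]
  refine Finset.prod_congr rfl fun k _ => ?_
  rw [Fintype.sum_bool]
  ring

/-- cardinality of {t : t k₀ = b₀} -/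
lemma aux_card (m : ℕ) (hm : 1 ≤ m) (k₀ : Fin m) (b₀ : Bool) :
    (Finset.univ.filter (fun t : Fin m → Bool => t k₀ = b₀)).card = 2 ^ (m - 1) := by
  classical
  rw [Finset.card_filter]
  have h1 : ∀ t : Fin m → Bool, (if t k₀ = b₀ then (1:ℕ) else 0) =
      ∏ k, (if k = k₀ then (if t k = b₀ then 1 else 0) else 1) := by
    intro t
    rw [Finset.prod_ite_eq' Finset.univ k₀ (fun k => if t k = b₀ then (1:ℕ) else 0)]
    simp
  rw [Finset.sum_congr rfl (fun t _ => h1 t)]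
  rw [aux_factor m (fun k b => if k = k₀ then (if b = b₀ then (1:ℕ) else 0) else 1)]
  have h2 : ∀ k : Fin m, ((if k = k₀ then (if false = b₀ then (1:ℕ) else 0) else 1) +
      (if k = k₀ then (if true = b₀ then 1 else 0) else 1)) = if k = k₀ then 1 else 2 := by
    intro k
    by_cases h : k = k₀ <;> cases b₀ <;> simp [h]
  rw [Finset.prod_congr rfl (fun k _ => h2 k)]
  have h3 := Finset.mul_prod_erase Finset.univ (fun k => if k = k₀ then (1:ℕ) else 2)
    (Finset.mem_univ k₀)
  rw [← h3]
  simp only [if_pos rfl, one_mul]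
  rw [Finset.prod_congr rfl (fun k hk => if_neg (Finset.ne_of_mem_erase hk)),
    Finset.prod_const, Finset.card_erase_of_mem (Finset.mem_univ k₀)]
  simp

/-- pair reindexing -/
lemma aux_pairs (B : ℕ) (hB : B = 2 * (B / 2)) (g : Fin B → ℝ)
    (pf : ∀ (k : Fin (B / 2)) (b : Bool), 2 * (k : ℕ) + (if b then 1 else 0) < B) :
    ∑ x : Fin B, g x = ∑ k : Fin (B / 2), ∑ b : Bool,
      g ⟨2 * (k : ℕ) + (if b then 1 else 0), pf k b⟩ := by
  rw [← Finset.sum_product']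
  refine Finset.sum_nbij' (i := fun x : Fin B => ((⟨(x : ℕ) / 2, by omega⟩ : Fin (B / 2)),
      decide ((x : ℕ) % 2 = 1)))
    (j := fun p : Fin (B / 2) × Bool =>
      (⟨2 * (p.1 : ℕ) + (if p.2 then 1 else 0), pf p.1 p.2⟩ : Fin B))
    (fun a _ => Finset.mem_product.2 ⟨Finset.mem_univ _, Finset.mem_univ _⟩)
    (fun a _ => Finset.mem_univ _) ?_ ?_ ?_
  · intro x _
    apply Fin.ext
    show 2 * ((x : ℕ) / 2) + (if decide ((x : ℕ) % 2 = 1) then 1 else 0) = (x : ℕ)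
    by_cases h : (x : ℕ) % 2 = 1 <;> simp [h] <;> omega
  · rintro ⟨k, b⟩ _
    have h1 : ((2 * (k : ℕ) + (if b then 1 else 0)) / 2) = (k : ℕ) := by cases b <;> simp <;> omega
    have h2 : decide ((2 * (k : ℕ) + (if b then 1 else 0)) % 2 = 1) = b := by
      cases b <;> simp <;> omega
    exact Prod.ext (Fin.ext h1) h2
  · intro x _
    congr 1
    apply Fin.ext
    show (x : ℕ) = 2 * ((x : ℕ) / 2) + (if decide ((x : ℕ) % 2 = 1) then 1 else 0)
    by_cases h : (x : ℕ) % 2 = 1 <;> simp [h] <;> omega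

lemma aux_memT_iff {B : ℕ} (hB : B = 2 * (B / 2)) (t : Fin (B / 2) → Bool) (x : Fin B) :
    memT t x ↔ t ⟨(x : ℕ) / 2, by omega⟩ = decide ((x : ℕ) % 2 = 1) := by
  constructor
  · rintro ⟨k, hk⟩
    have hkeq : (⟨(x : ℕ) / 2, by omega⟩ : Fin (B / 2)) = k := by
      apply Fin.ext
      show (x : ℕ) / 2 = (k : ℕ)
      rcases ht : t k <;> rw [ht] at hk <;> simp at hk <;> omega
    rw [hkeq]
    rcases ht : t k <;> rw [ht] at hk <;> simp at hk <;> simp [hk] <;> omega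
  · intro h
    refine ⟨⟨(x : ℕ) / 2, by omega⟩, ?_⟩
    rw [h]
    by_cases hx : (x : ℕ) % 2 = 1 <;> simp [hx] <;> omega

set_option maxHeartbeats 2000000

theorem stmt2 (γ : ℝ) (hγ : 0 < γ) :
    ∃ B₀ : ℕ, ∀ B : ℕ, B₀ ≤ B → 2 ∣ B →
      ∀ σ : Fin B → ℝ, (∀ x, 0 ≤ σ x) → (∑ x, σ x) = 1 →
      -- σ assigns mass at least 1/5 to S* = { x : σ x ≤ B^(7γ−1) }
      (1 / 5 ≤ ∑ x : Fin B, if σ x ≤ (B : ℝ) ^ (7 * γ - 1) then σ x else 0) →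
      ∀ τ : (Fin (B / 2) → Bool) → ℝ, (∀ t, 0 ≤ τ t) → (∑ t, τ t) = 1 →
      prHit σ τ ≤ 1 / 42 →
      (B : ℝ) / 2 - (1 / 840) * (B : ℝ) ^ ((1 : ℝ) - 7 * γ) ≤ condEntT σ τ →
      (∑ t : Fin (B / 2) → Bool,
          if fstar σ ((B : ℝ) ^ (7 * γ - 1)) t < 1 / 20 then τ t else 0) ≤ 1 / 2 := by
  classical
  refine ⟨2, fun B hB2 hdvd σ hσ0 hσ1 hSstar τ hτ0 hτ1 hHit hEnt => ?_⟩
  have hBn : B = 2 * (B / 2) := by omega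
  have hn1 : 1 ≤ B / 2 := by omega
  have hBpos : (0 : ℝ) < B := by
    have : (2 : ℝ) ≤ B := by exact_mod_cast hB2
    linarith
  set c : ℝ := (B : ℝ) ^ (7 * γ - 1) with hcdef
  set z : ℝ := (B : ℝ) ^ ((1 : ℝ) - 7 * γ) with hzdef
  have hcpos : 0 < c := Real.rpow_pos_of_pos hBpos _
  have hzpos : 0 < z := Real.rpow_pos_of_pos hBpos _
  have hzc : z * c = 1 := by
    rw [hcdef, hzdef, ← Real.rpow_add hBpos]
    norm_num
  -- the bad set A
  set A : Finset (Fin (B / 2) → Bool) :=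
    univ.filter (fun t => fstar σ c t < 1 / 20) with hAdef
  have hgoal : (∑ t : Fin (B / 2) → Bool, if fstar σ c t < 1 / 20 then τ t else 0)
      = ∑ t ∈ A, τ t := by
    rw [Finset.sum_filter]
  rw [hgoal]
  set TA := ∑ t ∈ A, τ t with hTAdef
  have hTA0 : 0 ≤ TA := Finset.sum_nonneg fun t _ => hτ0 t
  rcases Finset.eq_empty_or_nonempty A with hAe | hAne
  · rw [hTAdef, hAe, Finset.sum_empty]; norm_num
  -- normalizing constant
  set Z : ℝ := ∑ x : Fin B, ∑ t' : Fin (B / 2) → Bool, if memT t' x then 0 else σ x * τ t'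
    with hZdef
  have hZhit : Z = 1 - prHit σ τ := by
    have h1 : Z + prHit σ τ = 1 := by
      rw [hZdef, prHit, ← Finset.sum_add_distrib]
      have hx : ∀ x : Fin B,
          ((∑ t' : Fin (B / 2) → Bool, if memT t' x then 0 else σ x * τ t') +
            ∑ t : Fin (B / 2) → Bool, if memT t x then σ x * τ t else 0) = σ x := by
        intro x
        rw [← Finset.sum_add_distrib]
        have : ∀ t : Fin (B / 2) → Bool,
            ((if memT t x then 0 else σ x * τ t) + if memT t x then σ x * τ t else 0)
              = σ x * τ t := by
          intro t; split <;> ring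
        rw [Finset.sum_congr rfl (fun t _ => this t), ← Finset.mul_sum, hτ1, mul_one]
      rw [Finset.sum_congr rfl (fun x _ => hx x), hσ1]
    linarith
  have hprHit0 : 0 ≤ prHit σ τ := by
    apply Finset.sum_nonneg; intro x _
    apply Finset.sum_nonneg; intro t _
    split
    · exact mul_nonneg (hσ0 x) (hτ0 t)
    · exact le_refl 0
  have hZ1 : Z ≤ 1 := by rw [hZhit]; linarith
  have hZpos : 0 < Z := by rw [hZhit]; linarith
  -- the conditioned joint distribution
  have hpdef : ∀ x t, condJoint σ τ x t = (if memT t x then 0 else σ x * τ t) / Z := fun x t => rfl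
  have hp0 : ∀ x t, 0 ≤ condJoint σ τ x t := by
    intro x t
    rw [hpdef]
    apply div_nonneg _ hZpos.le
    split
    · exact le_refl 0
    · exact mul_nonneg (hσ0 x) (hτ0 t)
  have hpsum : ∑ x : Fin B, ∑ t : Fin (B / 2) → Bool, condJoint σ τ x t = 1 := by
    simp only [hpdef]
    rw [Finset.sum_congr rfl (fun x (_ : x ∈ univ) =>
      (Finset.sum_div univ (fun t => if memT t x then 0 else σ x * τ t) Z).symm),
      ← Finset.sum_div]
    exact div_self hZpos.ne'
  -- U = Pr[t ∈ A] under conditioned measure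
  set U : ℝ := ∑ x : Fin B, ∑ t ∈ A, condJoint σ τ x t with hUdef
  have hU0 : 0 ≤ U := Finset.sum_nonneg fun x _ => Finset.sum_nonneg fun t _ => hp0 x t
  -- lower bound for U via fstar
  have hUlow : 3 / 20 * TA ≤ U := by
    rw [hUdef, Finset.sum_comm, hTAdef, Finset.mul_sum]
    refine Finset.sum_le_sum fun t ht => ?_
    have hmem := Finset.mem_filter.1 (hAdef ▸ ht)
    have hfst : fstar σ c t < 1 / 20 := hmem.2
    -- M t := mass missed by T(t)
    set M : ℝ := ∑ x : Fin B, if memT t x then 0 else σ x with hMdef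
    have hMle1 : M ≤ 1 := by
      rw [hMdef, ← hσ1]
      refine Finset.sum_le_sum fun x _ => ?_
      split
      · exact hσ0 x
      · exact le_refl _
    have hM : 3 / 20 ≤ M := by
      have hsplit : ∀ x : Fin B, (if memT t x then σ x else 0) ≤
          (if memT t x ∧ σ x ≤ c then σ x else 0) + (if ¬ (σ x ≤ c) then σ x else 0) := by
        intro x
        by_cases h1 : memT t x <;> by_cases h2 : σ x ≤ c <;> simp [h1, h2, hσ0 x]
      have h2 : ∑ x : Fin B, (if memT t x then σ x else 0) ≤
          fstar σ c t + ∑ x : Fin B, (if ¬ (σ x ≤ c) then σ x else 0) := by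
        rw [fstar, ← Finset.sum_add_distrib]
        exact Finset.sum_le_sum fun x _ => hsplit x
      have h3 : (∑ x : Fin B, (if σ x ≤ c then σ x else 0)) +
          (∑ x : Fin B, (if ¬ (σ x ≤ c) then σ x else 0)) = 1 := by
        rw [← Finset.sum_add_distrib, ← hσ1]
        refine Finset.sum_congr rfl fun x _ => ?_
        split <;> simp
      have h4 : M + ∑ x : Fin B, (if memT t x then σ x else 0) = 1 := by
        rw [hMdef, ← Finset.sum_add_distrib, ← hσ1]
        refine Finset.sum_congr rfl fun x _ => ?_
        split <;> ring
      linarith [hSstar]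
    have hsum : ∑ x : Fin B, condJoint σ τ x t = M * τ t / Z := by
      simp only [hpdef]
      rw [← Finset.sum_div]
      congr 1
      rw [hMdef, Finset.sum_mul]
      refine Finset.sum_congr rfl fun x _ => ?_
      split <;> ring
    rw [hsum]
    have hτt := hτ0 t
    have step1 : 3 / 20 * τ t ≤ M * τ t := mul_le_mul_of_nonneg_right hM hτt
    have step2 : M * τ t ≤ M * τ t / Z := by
      rw [le_div_iff₀ hZpos]
      exact mul_le_of_le_one_right (mul_nonneg (by linarith) hτt) hZ1
    linarith
  -- counting bound on A
  have hxk : ∀ (k : Fin (B / 2)) (b : Bool), 2 * (k : ℕ) + (if b then 1 else 0) < B := by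
    intro k b
    have := k.isLt
    cases b <;> simp <;> omega
  set w : Fin (B / 2) → Bool → ℝ := fun k b =>
    if σ ⟨2 * (k : ℕ) + (if b then 1 else 0), hxk k b⟩ ≤ c
    then σ ⟨2 * (k : ℕ) + (if b then 1 else 0), hxk k b⟩ else 0 with hwdef
  have hite0 : ∀ y : Fin B, 0 ≤ (if σ y ≤ c then σ y else 0) := by
    intro y
    by_cases h : σ y ≤ c
    · rw [if_pos h]; exact hσ0 y
    · rw [if_neg h]
  have hitec : ∀ y : Fin B, (if σ y ≤ c then σ y else 0) ≤ c := by
    intro y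
    by_cases h : σ y ≤ c
    · rw [if_pos h]; exact h
    · rw [if_neg h]; exact hcpos.le
  have hw0 : ∀ k b, 0 ≤ w k b := fun k b => hite0 _
  have hwc : ∀ k b, w k b ≤ c := fun k b => hitec _
  have hmemTkb : ∀ (t : Fin (B / 2) → Bool) (k : Fin (B / 2)) (b : Bool),
      memT t ⟨2 * (k : ℕ) + (if b then 1 else 0), hxk k b⟩ ↔ t k = b := by
    intro t k b
    constructor
    · rintro ⟨k', hk'⟩
      have hk'' : 2 * (k : ℕ) + (if b then 1 else 0) = 2 * (k' : ℕ) + (if t k' then 1 else 0) :=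
        hk'
      show t k = b
      rcases hb : b <;> rcases ht' : t k' <;> rw [hb, ht'] at hk'' <;> simp at hk''
      · have hkk : k' = k := Fin.ext (by omega)
        rw [← hkk, ht']
      · exact absurd hk'' (by omega)
      · exact absurd hk'' (by omega)
      · have hkk : k' = k := Fin.ext (by omega)
        rw [← hkk, ht']
    · intro h
      exact ⟨k, by rw [h]⟩
  have hfs : ∀ t, fstar σ c t = ∑ k, w k (t k) := by
    intro t
    show (∑ x : Fin B, if memT t x ∧ σ x ≤ c then σ x else 0) = _
    rw [aux_pairs B hBn (fun x => if memT t x ∧ σ x ≤ c then σ x else 0) hxk]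
    refine Finset.sum_congr rfl fun k _ => ?_
    have hb : ∀ b, (if memT t ⟨2 * (k : ℕ) + (if b then 1 else 0), hxk k b⟩ ∧
        σ ⟨2 * (k : ℕ) + (if b then 1 else 0), hxk k b⟩ ≤ c
        then σ ⟨2 * (k : ℕ) + (if b then 1 else 0), hxk k b⟩ else 0) =
        if t k = b then w k b else 0 := by
      intro b
      by_cases h : t k = b
      · rw [if_pos h]
        have hmT : memT t ⟨2 * (k : ℕ) + (if b then 1 else 0), hxk k b⟩ := (hmemTkb t k b).2 h
        rw [hwdef]
        dsimp only
        by_cases h2 : σ ⟨2 * (k : ℕ) + (if b then 1 else 0), hxk k b⟩ ≤ c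
        · rw [if_pos ⟨hmT, h2⟩, if_pos h2]
        · rw [if_neg (fun hc' => h2 hc'.2), if_neg h2]
      · have hmT : ¬ memT t ⟨2 * (k : ℕ) + (if b then 1 else 0), hxk k b⟩ :=
          fun hm => h ((hmemTkb t k b).1 hm)
        rw [if_neg (fun hc' => hmT hc'.1), if_neg h]
    rw [Finset.sum_congr rfl fun b _ => hb b, Fintype.sum_bool]
    rcases ht : t k <;> simp [ht]
  have hS : 1 / 5 ≤ ∑ k : Fin (B / 2), (w k false + w k true) := by
    rw [aux_pairs B hBn (fun x => if σ x ≤ c then σ x else 0) hxk] at hSstar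
    refine le_trans hSstar (le_of_eq (Finset.sum_congr rfl fun k _ => ?_))
    rw [Fintype.sum_bool]
    exact add_comm _ _
  have hzy : ∀ y : ℝ, z * y = y / c := by
    intro y
    rw [eq_div_iff hcpos.ne']
    linear_combination y * hzc
  have hd0 : 0 ≤ 1 - Real.exp (-1) := by
    have : Real.exp (-1) ≤ 1 := by
      rw [show (1:ℝ) = Real.exp 0 by rw [Real.exp_zero]]
      exact Real.exp_le_exp.2 (by norm_num)
    linarith
  have hcount : (A.card : ℝ) ≤ 2 ^ (B / 2) *
      Real.exp (z / 20 - 1 / 5 * ((1 - Real.exp (-1)) / 2) * z) := by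
    have step1 : (A.card : ℝ) ≤ Real.exp (z / 20) *
        ∑ t : Fin (B / 2) → Bool, ∏ k, Real.exp (-(z * w k (t k))) := by
      calc (A.card : ℝ) = ∑ t ∈ A, (1 : ℝ) := by
            rw [Finset.sum_const, nsmul_eq_mul, mul_one]
        _ ≤ ∑ t ∈ A, Real.exp (z * (1 / 20 - fstar σ c t)) := by
            refine Finset.sum_le_sum fun t ht => ?_
            have hf : fstar σ c t < 1 / 20 := by
              rw [hAdef] at ht; exact (Finset.mem_filter.1 ht).2
            have h0 : 0 ≤ z * (1 / 20 - fstar σ c t) := mul_nonneg hzpos.le (by linarith)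
            linarith [Real.add_one_le_exp (z * (1 / 20 - fstar σ c t))]
        _ ≤ ∑ t : Fin (B / 2) → Bool, Real.exp (z * (1 / 20 - fstar σ c t)) :=
            Finset.sum_le_sum_of_subset_of_nonneg (Finset.filter_subset _ _)
              (fun t _ _ => (Real.exp_pos _).le)
        _ = Real.exp (z / 20) * ∑ t : Fin (B / 2) → Bool, ∏ k, Real.exp (-(z * w k (t k))) := by
            rw [Finset.mul_sum]
            refine Finset.sum_congr rfl fun t _ => ?_
            rw [← Real.exp_sum, ← Real.exp_add]
            congr 1
            rw [hfs t]
            rw [Finset.sum_neg_distrib, ← Finset.mul_sum]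
            ring
    have step2 : ∑ t : Fin (B / 2) → Bool, ∏ k, Real.exp (-(z * w k (t k))) ≤
        2 ^ (B / 2) * Real.exp (∑ k : Fin (B / 2),
          -((w k false + w k true) / (2 * c)) * (1 - Real.exp (-1))) := by
      rw [aux_factor (B / 2) (fun k b => Real.exp (-(z * w k b)))]
      calc ∏ k : Fin (B / 2), (Real.exp (-(z * w k false)) + Real.exp (-(z * w k true)))
          ≤ ∏ k : Fin (B / 2), (2 * Real.exp (-((w k false + w k true) / (2 * c)) *
              (1 - Real.exp (-1)))) := by
            refine Finset.prod_le_prod (fun k _ => by positivity) fun k _ => ?_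
            rw [hzy (w k false), hzy (w k true)]
            exact aux_chord c _ _ hcpos (hw0 k false) (hwc k false) (hw0 k true) (hwc k true)
        _ = 2 ^ (B / 2) * Real.exp (∑ k : Fin (B / 2),
              -((w k false + w k true) / (2 * c)) * (1 - Real.exp (-1))) := by
            rw [Finset.prod_mul_distrib, Finset.prod_const, Real.exp_sum, Finset.card_univ]
            simp
    have hE : ∑ k : Fin (B / 2), -((w k false + w k true) / (2 * c)) * (1 - Real.exp (-1)) ≤
        -(1 / 5 * ((1 - Real.exp (-1)) / 2) * z) := by
      have h1 : ∀ k : Fin (B / 2), -((w k false + w k true) / (2 * c)) * (1 - Real.exp (-1)) =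
          (-((1 - Real.exp (-1)) / (2 * c))) * (w k false + w k true) := fun k => by ring
      rw [Finset.sum_congr rfl fun k _ => h1 k, ← Finset.mul_sum]
      have h2 : (-((1 - Real.exp (-1)) / (2 * c))) * (∑ k : Fin (B / 2), (w k false + w k true))
          ≤ (-((1 - Real.exp (-1)) / (2 * c))) * (1 / 5) := by
        apply mul_le_mul_of_nonpos_left hS
        have : 0 ≤ (1 - Real.exp (-1)) / (2 * c) := by positivity
        linarith
      refine le_trans h2 (le_of_eq ?_)
      have := hzy ((1 - Real.exp (-1)) / 10)
      linear_combination this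
    calc (A.card : ℝ) ≤ Real.exp (z / 20) *
          (2 ^ (B / 2) * Real.exp (∑ k : Fin (B / 2),
            -((w k false + w k true) / (2 * c)) * (1 - Real.exp (-1)))) := by
          refine le_trans step1 ?_
          exact mul_le_mul_of_nonneg_left step2 (Real.exp_pos _).le
      _ ≤ Real.exp (z / 20) * (2 ^ (B / 2) * Real.exp (-(1 / 5 * ((1 - Real.exp (-1)) / 2) * z))) := by
          refine mul_le_mul_of_nonneg_left ?_ (Real.exp_pos _).le
          refine mul_le_mul_of_nonneg_left (Real.exp_le_exp.2 hE) (by positivity)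
      _ = 2 ^ (B / 2) * Real.exp (z / 20 - 1 / 5 * ((1 - Real.exp (-1)) / 2) * z) := by
          rw [mul_comm (Real.exp (z / 20)), mul_assoc, ← Real.exp_add]
          congr 2
          ring
  -- entropy upper bounds
  -- the sets E_x
  set Ex : Fin B → Finset (Fin (B / 2) → Bool) := fun x =>
    univ.filter (fun t => t ⟨(x : ℕ) / 2, by omega⟩ = !(decide ((x : ℕ) % 2 = 1))) with hExdef
  have hsupp : ∀ (x : Fin B) (t : Fin (B / 2) → Bool), t ∉ Ex x → condJoint σ τ x t = 0 := by
    intro x t ht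
    rw [hExdef] at ht
    simp only [Finset.mem_filter, Finset.mem_univ, true_and] at ht
    have hbool : ∀ a b : Bool, ¬ (a = !b) → a = b := by decide
    have hmT : memT t x := by
      rw [aux_memT_iff hBn]
      exact hbool _ _ ht
    rw [hpdef, if_pos hmT, zero_div]
  have hsuppF : ∀ (x : Fin B) (t : Fin (B / 2) → Bool) (P : ℝ), t ∉ Ex x →
      -(condJoint σ τ x t) * Real.logb 2 (condJoint σ τ x t / P) = 0 := by
    intro x t P ht
    rw [hsupp x t ht]
    ring
  have hExcard : ∀ x : Fin B, (Ex x).card = 2 ^ (B / 2 - 1) := by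
    intro x
    rw [hExdef]
    exact aux_card (B / 2) hn1 _ _
  have hn1R : (1 : ℝ) ≤ ((B / 2 : ℕ) : ℝ) := by exact_mod_cast hn1
  have hlogbEx : Real.logb 2 ((2 : ℝ) ^ (B / 2 - 1)) = ((B / 2 : ℕ) : ℝ) - 1 := by
    rw [Real.logb_pow, Real.logb_self_eq_one (by norm_num)]
    rw [Nat.cast_sub hn1]
    ring
  -- simple entropy bound : condEntT ≤ n - 1
  have hkey1 : ∀ x : Fin B,
      (∑ t : Fin (B / 2) → Bool, -(condJoint σ τ x t) *
        Real.logb 2 (condJoint σ τ x t / ∑ t' : Fin (B / 2) → Bool, condJoint σ τ x t'))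
      ≤ (∑ t : Fin (B / 2) → Bool, condJoint σ τ x t) * (((B / 2 : ℕ) : ℝ) - 1) := by
    intro x
    set P : ℝ := ∑ t' : Fin (B / 2) → Bool, condJoint σ τ x t' with hPdef
    have hPnn : 0 ≤ P := Finset.sum_nonneg fun t _ => hp0 x t
    rcases eq_or_lt_of_le hPnn with hP0 | hPpos
    · have hz : ∀ t, condJoint σ τ x t = 0 := by
        intro t
        exact (Finset.sum_eq_zero_iff_of_nonneg fun t _ => hp0 x t).1 hP0.symm t (Finset.mem_univ t)
      rw [Finset.sum_eq_zero fun t _ => by rw [hz t]; ring, ← hP0]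
      simp
    · have hres : ∀ (f : (Fin (B / 2) → Bool) → ℝ), (∀ t, t ∉ Ex x → f t = 0) →
          ∑ t : Fin (B / 2) → Bool, f t = ∑ t ∈ Ex x, f t := by
        intro f hf
        exact (Finset.sum_subset (Finset.subset_univ _) fun t _ ht => hf t ht).symm
      have hPEx : ∑ t ∈ Ex x, condJoint σ τ x t = P := by
        rw [hPdef, hres (fun t => condJoint σ τ x t) (fun t ht => hsupp x t ht)]
      have hLHS : (∑ t : Fin (B / 2) → Bool, -(condJoint σ τ x t) *
          Real.logb 2 (condJoint σ τ x t / P)) = ∑ t ∈ Ex x, -(condJoint σ τ x t) *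
          Real.logb 2 (condJoint σ τ x t / P) :=
        hres _ (fun t ht => hsuppF x t P ht)
      rw [hLHS]
      have hjen := aux_jensen (Ex x) (fun t => condJoint σ τ x t)
        (fun t _ => hp0 x t) P hPpos (((B / 2 : ℕ) : ℝ) - 1)
        (by rw [hExcard x]; push_cast; rw [hlogbEx])
      rw [hPEx] at hjen
      rw [div_self hPpos.ne', Real.logb_one, mul_zero, add_zero] at hjen
      exact hjen
  have hEnt1 : condEntT σ τ ≤ ((B / 2 : ℕ) : ℝ) - 1 := by
    have : condEntT σ τ ≤ ∑ x : Fin B,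
        (∑ t : Fin (B / 2) → Bool, condJoint σ τ x t) * (((B / 2 : ℕ) : ℝ) - 1) :=
      Finset.sum_le_sum fun x _ => hkey1 x
    rw [← Finset.sum_mul, hpsum, one_mul] at this
    exact this
  -- refined entropy bound
  set Cx : Fin B → Finset (Fin (B / 2) → Bool) := fun x =>
    (Ex x).filter (fun t => ¬ (fstar σ c t < 1 / 20)) with hCxdef
  set LA : ℝ := Real.logb 2 (A.card) with hLAdef
  have hLA0 : 0 ≤ LA := by
    rw [hLAdef]
    apply Real.logb_nonneg (by norm_num)
    have : (1 : ℕ) ≤ A.card := Finset.card_pos.2 hAne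
    exact_mod_cast this
  have hkey2 : ∀ x : Fin B,
      (∑ t : Fin (B / 2) → Bool, -(condJoint σ τ x t) *
        Real.logb 2 (condJoint σ τ x t / ∑ t' : Fin (B / 2) → Bool, condJoint σ τ x t'))
      ≤ (∑ t ∈ A, condJoint σ τ x t) * LA +
        (∑ t ∈ Cx x, condJoint σ τ x t) * (((B / 2 : ℕ) : ℝ) - 1) +
        (∑ t : Fin (B / 2) → Bool, condJoint σ τ x t) := by
    intro x
    set P : ℝ := ∑ t' : Fin (B / 2) → Bool, condJoint σ τ x t' with hPdef
    set u : ℝ := ∑ t ∈ A, condJoint σ τ x t with hudef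
    set v : ℝ := ∑ t ∈ Cx x, condJoint σ τ x t with hvdef
    have hunn : 0 ≤ u := Finset.sum_nonneg fun t _ => hp0 x t
    have hvnn : 0 ≤ v := Finset.sum_nonneg fun t _ => hp0 x t
    have hPnn : 0 ≤ P := Finset.sum_nonneg fun t _ => hp0 x t
    -- split of sums over univ into A and Cx
    have hsplit : ∀ (f : (Fin (B / 2) → Bool) → ℝ), (∀ t, t ∉ Ex x → f t = 0) →
        ∑ t : Fin (B / 2) → Bool, f t = (∑ t ∈ A, f t) + ∑ t ∈ Cx x, f t := by
      intro f hf
      rw [← Finset.sum_filter_add_sum_filter_not univ (fun t => fstar σ c t < 1 / 20) f, ← hAdef]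
      congr 1
      refine (Finset.sum_subset ?_ ?_).symm
      · intro t ht
        rw [hCxdef] at ht
        simp only [Finset.mem_filter] at ht ⊢
        exact ⟨Finset.mem_univ t, ht.2⟩
      · intro t ht hnt
        by_cases hEx : t ∈ Ex x
        · exfalso
          apply hnt
          rw [hCxdef]
          simp only [Finset.mem_filter] at ht ⊢
          exact ⟨hEx, ht.2⟩
        · exact hf t hEx
    have hPuv : P = u + v := by
      rw [hPdef, hudef, hvdef]
      exact hsplit (fun t => condJoint σ τ x t) (fun t ht => hsupp x t ht)
    rcases eq_or_lt_of_le hPnn with hP0 | hPpos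
    · have hz : ∀ t, condJoint σ τ x t = 0 := by
        intro t
        exact (Finset.sum_eq_zero_iff_of_nonneg fun t _ => hp0 x t).1 hP0.symm t (Finset.mem_univ t)
      have hu0 : u = 0 := by rw [hudef]; exact Finset.sum_eq_zero fun t _ => hz t
      have hv0 : v = 0 := by rw [hvdef]; exact Finset.sum_eq_zero fun t _ => hz t
      rw [Finset.sum_eq_zero fun t _ => by rw [hz t]; ring, hu0, hv0, ← hP0]
      simp
    · have hLHS : (∑ t : Fin (B / 2) → Bool, -(condJoint σ τ x t) *
          Real.logb 2 (condJoint σ τ x t / P)) =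
          (∑ t ∈ A, -(condJoint σ τ x t) * Real.logb 2 (condJoint σ τ x t / P)) +
          ∑ t ∈ Cx x, -(condJoint σ τ x t) * Real.logb 2 (condJoint σ τ x t / P) :=
        hsplit _ (fun t ht => hsuppF x t P ht)
      rw [hLHS]
      have hjenA := aux_jensen A (fun t => condJoint σ τ x t)
        (fun t _ => hp0 x t) P hPpos LA (le_of_eq hLAdef.symm)
      have hCcard : Real.logb 2 ((Cx x).card) ≤ ((B / 2 : ℕ) : ℝ) - 1 := by
        have hle : (Cx x).card ≤ 2 ^ (B / 2 - 1) := by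
          rw [← hExcard x, hCxdef]
          exact Finset.card_le_card (Finset.filter_subset _ _)
        rcases Nat.eq_zero_or_pos (Cx x).card with h0 | hpos
        · rw [h0]
          push_cast
          rw [Real.logb_zero]
          linarith
        · have hcast : (((Cx x).card : ℕ) : ℝ) ≤ (2 : ℝ) ^ (B / 2 - 1) := by exact_mod_cast hle
          have hposR : (0 : ℝ) < (((Cx x).card : ℕ) : ℝ) := by exact_mod_cast hpos
          refine le_trans (Real.logb_le_logb_of_le (by norm_num) hposR hcast) ?_
          rw [hlogbEx]
      have hjenC := aux_jensen (Cx x) (fun t => condJoint σ τ x t)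
        (fun t _ => hp0 x t) P hPpos (((B / 2 : ℕ) : ℝ) - 1) hCcard
      have hbin : u * Real.logb 2 (P / u) + v * Real.logb 2 (P / v) ≤ P := by
        rw [hPuv]
        exact aux_binary u v hunn hvnn
      rw [← hudef] at hjenA
      rw [← hvdef] at hjenC
      linarith
  have hEnt2 : condEntT σ τ ≤ U * LA + (1 - U) * (((B / 2 : ℕ) : ℝ) - 1) + 1 := by
    have h1 : condEntT σ τ ≤ ∑ x : Fin B,
        ((∑ t ∈ A, condJoint σ τ x t) * LA +
        (∑ t ∈ Cx x, condJoint σ τ x t) * (((B / 2 : ℕ) : ℝ) - 1) +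
        (∑ t : Fin (B / 2) → Bool, condJoint σ τ x t)) :=
      Finset.sum_le_sum fun x _ => hkey2 x
    rw [Finset.sum_add_distrib, Finset.sum_add_distrib, ← Finset.sum_mul, ← Finset.sum_mul,
      hpsum, ← hUdef] at h1
    have hV : ∑ x : Fin B, ∑ t ∈ Cx x, condJoint σ τ x t = 1 - U := by
      have h2 : ∀ x : Fin B, ∑ t : Fin (B / 2) → Bool, condJoint σ τ x t =
          (∑ t ∈ A, condJoint σ τ x t) + ∑ t ∈ Cx x, condJoint σ τ x t := by
        intro x
        rw [← Finset.sum_filter_add_sum_filter_not univ (fun t => fstar σ c t < 1 / 20)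
          (fun t => condJoint σ τ x t), ← hAdef]
        congr 1
        refine (Finset.sum_subset ?_ ?_).symm
        · intro t ht
          rw [hCxdef] at ht
          simp only [Finset.mem_filter] at ht ⊢
          exact ⟨Finset.mem_univ t, ht.2⟩
        · intro t ht hnt
          by_cases hEx : t ∈ Ex x
          · exfalso
            apply hnt
            rw [hCxdef]
            simp only [Finset.mem_filter] at ht ⊢
            exact ⟨hEx, ht.2⟩
          · exact hsupp x t hEx
      have h3 := hpsum
      rw [Finset.sum_congr rfl fun x _ => h2 x, Finset.sum_add_distrib, ← hUdef] at h3
      linarith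
    rw [hV] at h1
    exact h1
  -- endgame
  have hcastn : ((B / 2 : ℕ) : ℝ) = (B : ℝ) / 2 := by
    have : (B : ℝ) = ((2 * (B / 2) : ℕ) : ℝ) := by exact_mod_cast congrArg Nat.cast hBn
    push_cast at this
    linarith
  have hz840 : 840 ≤ z := by
    rw [hcastn] at hEnt1
    nlinarith [le_trans hEnt hEnt1]
  set q : ℝ := (1 - Real.exp (-1)) / 10 - 1 / 20 with hqdef
  set L2 : ℝ := Real.log 2 with hL2def
  have hL2pos : 0 < L2 := Real.log_pos (by norm_num)
  have hL2lt : L2 < 0.6932 := lt_trans Real.log_two_lt_d9 (by norm_num)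
  have hqlow : 0.0132 ≤ q := by
    have he1 : (2.7182818283 : ℝ) < Real.exp 1 := Real.exp_one_gt_d9
    have hexppos : (0 : ℝ) < Real.exp 1 := Real.exp_pos 1
    have he2 : Real.exp (-1) ≤ 0.368 := by
      rw [Real.exp_neg]
      rw [inv_le_comm₀ hexppos (by norm_num)]
      linarith
    rw [hqdef]
    linarith
  have hLA : LA ≤ (B : ℝ) / 2 - q * z / L2 := by
    have h1 : (0 : ℝ) < A.card := by
      have : (1 : ℕ) ≤ A.card := Finset.card_pos.2 hAne
      exact_mod_cast this
    have h2 : LA ≤ Real.logb 2 ((2 : ℝ) ^ (B / 2) *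
        Real.exp (z / 20 - 1 / 5 * ((1 - Real.exp (-1)) / 2) * z)) := by
      rw [hLAdef]
      refine Real.logb_le_logb_of_le (by norm_num) h1 ?_
      exact_mod_cast hcount
    have h3 : Real.logb 2 ((2 : ℝ) ^ (B / 2) *
        Real.exp (z / 20 - 1 / 5 * ((1 - Real.exp (-1)) / 2) * z)) =
        ((B / 2 : ℕ) : ℝ) + (z / 20 - 1 / 5 * ((1 - Real.exp (-1)) / 2) * z) / L2 := by
      rw [Real.logb_mul (by positivity) (Real.exp_ne_zero _), Real.logb_pow,
        Real.logb_self_eq_one (by norm_num), Real.logb, Real.log_exp, hL2def, mul_one]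
    have h4 : z / 20 - 1 / 5 * ((1 - Real.exp (-1)) / 2) * z = -(q * z) := by
      rw [hqdef]; ring
    rw [h3, h4, hcastn] at h2
    have h5 : -(q * z) / L2 = -(q * z / L2) := by ring
    rw [h5] at h2
    linarith
  have hUQ : U * (q * z / L2 - 1) ≤ z / 840 := by
    have h1 : U * LA ≤ U * ((B : ℝ) / 2 - q * z / L2) := mul_le_mul_of_nonneg_left hLA hU0
    rw [hcastn] at hEnt2
    nlinarith [le_trans hEnt hEnt2]
  have h3 : U * (q * z - L2) ≤ z / 840 * L2 := by
    have : U * (q * z - L2) = (U * (q * z / L2 - 1)) * L2 := by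
      field_simp
    rw [this]
    exact mul_le_mul_of_nonneg_right hUQ hL2pos.le
  have hzpos' : (0 : ℝ) ≤ z := hzpos.le
  have hgap : (0 : ℝ) ≤ 0.0132 * z - 0.6932 := by nlinarith
  have h4 : 0.15 * TA * (0.0132 * z - 0.6932) ≤ U * (q * z - L2) := by
    have hle1 : 0.0132 * z - 0.6932 ≤ q * z - L2 := by nlinarith
    have hle2 : 0.15 * TA ≤ U := by linarith [hUlow]
    exact mul_le_mul hle2 hle1 hgap hU0
  by_contra hTA2
  push_neg at hTA2
  have h5 : 0.075 * (0.0132 * z - 0.6932) ≤ 0.15 * TA * (0.0132 * z - 0.6932) := by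
    apply mul_le_mul_of_nonneg_right _ hgap
    linarith
  have h6 : z / 840 * L2 ≤ z / 840 * 0.6932 := by
    apply mul_le_mul_of_nonneg_left hL2lt.le
    positivity
  linarith
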